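/- (Lemma 3.3.) Assume ρ/2 − L_h/ρ − L_h > 0, f(U) ≥ 0 for all U ∈ ℝ^M, and h(V) ≥ 0 for all V ∈ ℝ^N. Then for ADMM iterates (U^k, V^k, P^k) as in the context, the real sequence (L(U^k, V^k, P^k))_{k≥1} converges, and ‖V^{k+1} − V^k‖ → 0 and ‖P^{k+1} − P^k‖ → 0 as k → ∞. -/

import Mathlib

open scoped RealInnerProductSpace
open Filter

/-- Matrix–vector product `H U` as a map between Euclidean spaces. -/
noncomputable def mvec {M N : ℕ} (H : Matrix (Fin N) (Fin M) ℝ)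
    (U : EuclideanSpace ℝ (Fin M)) : EuclideanSpace ℝ (Fin N) :=
  (WithLp.equiv 2 (Fin N → ℝ)).symm (H.mulVec (WithLp.equiv 2 (Fin M → ℝ) U))

/-- The augmented Lagrangian
`L(U,V,P) = f(U) + h(V) + ⟨P, V − HU⟩ + (ρ/2)‖V − HU‖²`. -/
noncomputable def lagr {M N : ℕ} (H : Matrix (Fin N) (Fin M) ℝ) (ρ : ℝ)
    (f : EuclideanSpace ℝ (Fin M) → ℝ) (h : EuclideanSpace ℝ (Fin N) → ℝ)
    (U : EuclideanSpace ℝ (Fin M)) (V P : EuclideanSpace ℝ (Fin N)) : ℝ :=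
  f U + h V + ⟪P, V - mvec H U⟫ + (ρ / 2) * ‖V - mvec H U‖ ^ 2

/-- The box constraint set `K = {U : 0 ≤ Uᵢ ≤ 1 for all i}`. -/
def Kbox (M : ℕ) : Set (EuclideanSpace ℝ (Fin M)) := {U | ∀ i, 0 ≤ U i ∧ U i ≤ 1}

section AuxADMM

variable {F : Type*} [NormedAddCommGroup F] [InnerProductSpace ℝ F] [CompleteSpace F]

lemma aux_line (h : F → ℝ) (hdiff : Differentiable ℝ h) (x w : F) (t : ℝ) :
    HasDerivAt (fun s : ℝ => h (x + s • w)) ⟪gradient h (x + t • w), w⟫ t := by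
  have hg : HasFDerivAt h (InnerProductSpace.toDual ℝ F (gradient h (x + t • w))) (x + t • w) := by
    have := (hdiff (x + t • w)).hasGradientAt
    rwa [hasGradientAt_iff_hasFDerivAt] at this
  have hline : HasDerivAt (fun s : ℝ => x + s • w) w t := by
    simpa using ((hasDerivAt_id t).smul_const w).const_add x
  have := hg.comp_hasDerivAt t hline
  simpa [InnerProductSpace.toDual_apply_apply, Function.comp_def] using this

lemma aux_descent (h : F → ℝ) (hdiff : Differentiable ℝ h) {Lh : ℝ}
    (hlip : ∀ V W : F, ‖gradient h V - gradient h W‖ ≤ Lh * ‖V - W‖) (x y : F) :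
    |h y - h x - ⟪gradient h x, y - x⟫| ≤ Lh / 2 * ‖y - x‖ ^ 2 := by
  set d := y - x with hd
  set g := gradient h x with hgdef
  set F1 : ℝ → ℝ := fun t => h (x + t • d) - h x - t * ⟪g, d⟫ with hF1
  have hF : ∀ t : ℝ, HasDerivAt F1 ⟪gradient h (x + t • d) - g, d⟫ t := by
    intro t
    have h1 := aux_line h hdiff x d t
    have h2 := (h1.sub_const (h x)).sub ((hasDerivAt_id t).mul_const ⟪g, d⟫)
    exact h2.congr_deriv (by simp [inner_sub_left])
  have key := image_norm_le_of_norm_deriv_right_le_deriv_boundary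
    (f := F1) (a := 0) (b := 1)
    (f' := fun t => ⟪gradient h (x + t • d) - g, d⟫)
    (B := fun t => Lh * ‖d‖ ^ 2 * t ^ 2 / 2) (B' := fun t => Lh * ‖d‖ ^ 2 * t)
    (fun t _ => (hF t).continuousAt.continuousWithinAt)
    (fun t _ => (hF t).hasDerivWithinAt)
    (by simp [hF1])
    (fun t => by
      have := ((hasDerivAt_pow 2 t).const_mul (Lh * ‖d‖ ^ 2)).div_const 2
      exact this.congr_deriv (by ring))
    (fun t ht => by
      have h1 : |⟪gradient h (x + t • d) - g, d⟫| ≤ ‖gradient h (x + t • d) - g‖ * ‖d‖ :=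
        abs_real_inner_le_norm _ _
      have h2 : ‖gradient h (x + t • d) - g‖ ≤ Lh * ‖t • d‖ := by
        have := hlip (x + t • d) x
        simpa using this
      have h3 : ‖t • d‖ = t * ‖d‖ := by
        rw [norm_smul, Real.norm_eq_abs, abs_of_nonneg ht.1]
      rw [Real.norm_eq_abs]
      calc |⟪gradient h (x + t • d) - g, d⟫| ≤ ‖gradient h (x + t • d) - g‖ * ‖d‖ := h1
        _ ≤ (Lh * ‖t • d‖) * ‖d‖ := by
            exact mul_le_mul_of_nonneg_right h2 (norm_nonneg _)
        _ = Lh * ‖d‖ ^ 2 * t := by rw [h3]; ring)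
  have h1 := key (Set.right_mem_Icc.mpr zero_le_one)
  have hxd : x + d = y := by rw [hd]; abel
  have hF1one : F1 1 = h y - h x - ⟪g, d⟫ := by
    simp [hF1, hxd]
  rw [hF1one, Real.norm_eq_abs] at h1
  calc |h y - h x - ⟪g, d⟫| ≤ Lh * ‖d‖ ^ 2 * 1 ^ 2 / 2 := h1
    _ = Lh / 2 * ‖d‖ ^ 2 := by ring

omit [CompleteSpace F] in
lemma aux_quad (P c xv y : F) (ρ : ℝ) :
    ⟪P, y - c⟫ + ρ / 2 * ‖y - c‖ ^ 2
      = ⟪P, xv - c⟫ + ρ / 2 * ‖xv - c‖ ^ 2 + ⟪P + ρ • (xv - c), y - xv⟫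
        + ρ / 2 * ‖y - xv‖ ^ 2 := by
  have e : y - c = (xv - c) + (y - xv) := by abel
  rw [e, norm_add_sq_real, inner_add_right, inner_add_left, real_inner_smul_left]
  ring

end AuxADMM

lemma aux_stationary {M N : ℕ} (H : Matrix (Fin N) (Fin M) ℝ) (ρ : ℝ)
    (f : EuclideanSpace ℝ (Fin M) → ℝ) (h : EuclideanSpace ℝ (Fin N) → ℝ)
    (hdiff : Differentiable ℝ h) (Uv : EuclideanSpace ℝ (Fin M))
    (x Pv : EuclideanSpace ℝ (Fin N))
    (hmin : ∀ V', lagr H ρ f h Uv x Pv ≤ lagr H ρ f h Uv V' Pv) :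
    gradient h x + Pv + ρ • (x - mvec H Uv) = 0 := by
  set c := mvec H Uv with hc
  set G := gradient h x + Pv + ρ • (x - c) with hG
  have hψeq : ∀ t : ℝ, lagr H ρ f h Uv (x + t • G) Pv
      = h (x + t • G) + ((f Uv + ⟪Pv, x - c⟫ + ρ / 2 * ‖x - c‖ ^ 2)
        + (⟪Pv, G⟫ + ρ * ⟪x - c, G⟫) * t + (ρ / 2 * ‖G‖ ^ 2) * t ^ 2) := by
    intro t
    have hxc : x + t • G - c = (x - c) + t • G := by abel
    rw [lagr, hxc, norm_add_sq_real]
    simp only [inner_add_right, inner_smul_right, norm_smul, mul_pow, Real.norm_eq_abs, sq_abs]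
    ring
  have hloc : IsLocalMin (fun t : ℝ => lagr H ρ f h Uv (x + t • G) Pv) 0 :=
    Filter.Eventually.of_forall (fun t => by simpa using hmin (x + t • G))
  have hpoly : HasDerivAt (fun t : ℝ => (f Uv + ⟪Pv, x - c⟫ + ρ / 2 * ‖x - c‖ ^ 2)
      + (⟪Pv, G⟫ + ρ * ⟪x - c, G⟫) * t + (ρ / 2 * ‖G‖ ^ 2) * t ^ 2)
      ((⟪Pv, G⟫ + ρ * ⟪x - c, G⟫) + (ρ / 2 * ‖G‖ ^ 2) * (2 * 0)) 0 := by
    have h1 : HasDerivAt (fun t : ℝ => (⟪Pv, G⟫ + ρ * ⟪x - c, G⟫) * t)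
        (⟪Pv, G⟫ + ρ * ⟪x - c, G⟫) 0 := by
      simpa using (hasDerivAt_id (0:ℝ)).const_mul (⟪Pv, G⟫ + ρ * ⟪x - c, G⟫)
    have h2 : HasDerivAt (fun t : ℝ => (ρ / 2 * ‖G‖ ^ 2) * t ^ 2)
        ((ρ / 2 * ‖G‖ ^ 2) * (2 * 0)) 0 := by
      have := (hasDerivAt_pow 2 (0:ℝ)).const_mul (ρ / 2 * ‖G‖ ^ 2)
      exact this.congr_deriv (by ring)
    exact (h1.const_add _).add h2
  have hder : HasDerivAt (fun t : ℝ => lagr H ρ f h Uv (x + t • G) Pv) ⟪G, G⟫ 0 := by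
    have h1 := aux_line h hdiff x G 0
    have h2 := h1.add hpoly
    have h4 : (fun t : ℝ => lagr H ρ f h Uv (x + t • G) Pv)
        = fun t : ℝ => h (x + t • G) + ((f Uv + ⟪Pv, x - c⟫ + ρ / 2 * ‖x - c‖ ^ 2)
        + (⟪Pv, G⟫ + ρ * ⟪x - c, G⟫) * t + (ρ / 2 * ‖G‖ ^ 2) * t ^ 2) := funext hψeq
    have h3 : ⟪gradient h (x + (0:ℝ) • G), G⟫
        + ((⟪Pv, G⟫ + ρ * ⟪x - c, G⟫) + (ρ / 2 * ‖G‖ ^ 2) * (2 * 0)) = ⟪G, G⟫ := by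
      have hx0 : x + (0:ℝ) • G = x := by simp
      rw [hx0, hG, inner_add_left, inner_add_left, real_inner_smul_left]
      ring
    rw [h4, ← h3]
    exact h2
  have hzero : ⟪G, G⟫ = (0:ℝ) := hloc.hasDerivAt_eq_zero hder
  have hG0 : G = 0 := inner_self_eq_zero.mp hzero
  rw [hG] at hG0
  exact hG0

/-- Lemma 3.3: the Lagrangian values converge and successive differences of `V` and
`P` tend to zero. -/
theorem admm_lagrangian_convergence
    {M N : ℕ} (H : Matrix (Fin N) (Fin M) ℝ) (ρ Lh : ℝ)
    (hρ : 0 < ρ) (hLh : 0 < Lh)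
    (f : EuclideanSpace ℝ (Fin M) → ℝ) (h : EuclideanSpace ℝ (Fin N) → ℝ)
    (hdiff : Differentiable ℝ h)
    (hlip : ∀ V W : EuclideanSpace ℝ (Fin N),
      ‖gradient h V - gradient h W‖ ≤ Lh * ‖V - W‖)
    (U : ℕ → EuclideanSpace ℝ (Fin M)) (V P : ℕ → EuclideanSpace ℝ (Fin N))
    (hUK : ∀ k, U k ∈ Kbox M)
    (hUmin : ∀ k, ∀ U' ∈ Kbox M,
      lagr H ρ f h (U (k+1)) (V k) (P k) ≤ lagr H ρ f h U' (V k) (P k))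
    (hVmin : ∀ k, ∀ V' : EuclideanSpace ℝ (Fin N),
      lagr H ρ f h (U (k+1)) (V (k+1)) (P k) ≤ lagr H ρ f h (U (k+1)) V' (P k))
    (hPup : ∀ k, P (k+1) = P k + ρ • (V (k+1) - mvec H (U (k+1))))
    (hcond : 0 < ρ / 2 - Lh / ρ - Lh)
    (hf : ∀ U' : EuclideanSpace ℝ (Fin M), 0 ≤ f U')
    (hh : ∀ V' : EuclideanSpace ℝ (Fin N), 0 ≤ h V')
    :
    (∃ l : ℝ, Tendsto (fun k => lagr H ρ f h (U k) (V k) (P k)) atTop (nhds l)) ∧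
      Tendsto (fun k => ‖V (k+1) - V k‖) atTop (nhds 0) ∧
        Tendsto (fun k => ‖P (k+1) - P k‖) atTop (nhds 0) := by
  -- basic quantities
  set Lk : ℕ → ℝ := fun k => lagr H ρ f h (U k) (V k) (P k) with hLkdef
  -- stationarity of the V-step
  have hstat : ∀ k, gradient h (V (k+1)) + P k + ρ • (V (k+1) - mvec H (U (k+1))) = 0 :=
    fun k => aux_stationary H ρ f h hdiff (U (k+1)) (V (k+1)) (P k) (hVmin k)
  have hgradP : ∀ k, gradient h (V (k+1)) = -P (k+1) := by
    intro k
    have h1 := hstat k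
    rw [add_assoc] at h1
    have h2 := eq_neg_of_add_eq_zero_left h1
    rw [h2, hPup k]
  have hPdiff : ∀ k, ‖P (k+1+1) - P (k+1)‖ ≤ Lh * ‖V (k+1+1) - V (k+1)‖ := by
    intro k
    have e : P (k+1+1) - P (k+1) = -(gradient h (V (k+1+1)) - gradient h (V (k+1))) := by
      rw [hgradP (k+1), hgradP k]; abel
    rw [e, norm_neg]
    exact hlip _ _
  -- positivity facts
  have hLρ : Lh / ρ > 0 := div_pos hLh hρ
  have hρ2Lh : 2 * Lh < ρ := by linarith
  set c0 : ℝ := ρ / 2 - Lh / 2 - Lh ^ 2 / ρ with hc0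
  have hc0pos : 0 < c0 := by
    have h2 : Lh ^ 2 / ρ < Lh / 2 := by
      rw [div_lt_div_iff₀ hρ two_pos]
      nlinarith
    rw [hc0]
    have h4 : Lh ^ 2 / ρ ≥ 0 := by positivity
    linarith
  -- descent inequality
  have hdescent : ∀ k, Lk (k+1+1) ≤ Lk (k+1) - c0 * ‖V (k+1+1) - V (k+1)‖ ^ 2 := by
    intro k
    have ha : lagr H ρ f h (U (k+1+1)) (V (k+1)) (P (k+1)) ≤ Lk (k+1) :=
      hUmin (k+1) (U (k+1)) (hUK (k+1))
    -- (b): V-step descent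
    have hstat' := hstat (k+1)
    rw [add_assoc] at hstat'
    have hdesc := aux_descent h hdiff hlip (V (k+1+1)) (V (k+1))
    have habs := abs_le.mp hdesc
    have hquad := aux_quad (P (k+1)) (mvec H (U (k+1+1))) (V (k+1+1)) (V (k+1)) ρ
    have hinner : ⟪gradient h (V (k+1+1)), V (k+1) - V (k+1+1)⟫
        + ⟪P (k+1) + ρ • (V (k+1+1) - mvec H (U (k+1+1))), V (k+1) - V (k+1+1)⟫ = 0 := by
      rw [← inner_add_left, hstat', inner_zero_left]
    have hb : lagr H ρ f h (U (k+1+1)) (V (k+1+1)) (P (k+1))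
        ≤ lagr H ρ f h (U (k+1+1)) (V (k+1)) (P (k+1))
          - (ρ - Lh) / 2 * ‖V (k+1) - V (k+1+1)‖ ^ 2 := by
      simp only [lagr]
      linarith [habs.1, hquad, hinner]
    -- (c): P-step increase
    have hPm := hPup (k+1)
    have e1 : Lk (k+1+1) = lagr H ρ f h (U (k+1+1)) (V (k+1+1)) (P (k+1))
        + ⟪P (k+1+1) - P (k+1), V (k+1+1) - mvec H (U (k+1+1))⟫ := by
      simp only [hLkdef, lagr, inner_sub_left]
      ring
    have e2 : ⟪P (k+1+1) - P (k+1), V (k+1+1) - mvec H (U (k+1+1))⟫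
        = (1/ρ) * ‖P (k+1+1) - P (k+1)‖ ^ 2 := by
      have hw : P (k+1+1) - P (k+1) = ρ • (V (k+1+1) - mvec H (U (k+1+1))) := by
        rw [hPm]; abel
      rw [hw, real_inner_smul_left, real_inner_self_eq_norm_sq, norm_smul, Real.norm_eq_abs,
        abs_of_pos hρ, mul_pow]
      field_simp
    have e3 : ‖P (k+1+1) - P (k+1)‖ ^ 2 ≤ Lh ^ 2 * ‖V (k+1+1) - V (k+1)‖ ^ 2 := by
      have := hPdiff k
      nlinarith [norm_nonneg (P (k+1+1) - P (k+1)), norm_nonneg (V (k+1+1) - V (k+1)),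
        hLh.le]
    have hnormrev : ‖V (k+1) - V (k+1+1)‖ = ‖V (k+1+1) - V (k+1)‖ := norm_sub_rev _ _
    have hc : Lk (k+1+1) ≤ lagr H ρ f h (U (k+1+1)) (V (k+1+1)) (P (k+1))
        + Lh ^ 2 / ρ * ‖V (k+1+1) - V (k+1)‖ ^ 2 := by
      rw [e1, e2]
      have h6 := mul_le_mul_of_nonneg_left e3 (by positivity : (0:ℝ) ≤ 1/ρ)
      have h7 : 1/ρ * (Lh ^ 2 * ‖V (k+1+1) - V (k+1)‖ ^ 2)
          = Lh ^ 2 / ρ * ‖V (k+1+1) - V (k+1)‖ ^ 2 := by ring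
      linarith
    rw [hnormrev] at hb
    rw [hc0]
    linarith
  -- lower bound
  have hLb : ∀ k, 0 ≤ Lk (k+1) := by
    intro k
    have hg := hgradP k
    have hP : P (k+1) = -gradient h (V (k+1)) := by rw [hg, neg_neg]
    have hdesc := aux_descent h hdiff hlip (V (k+1)) (mvec H (U (k+1)))
    have habs := abs_le.mp hdesc
    have hsymm : ⟪gradient h (V (k+1)), mvec H (U (k+1)) - V (k+1)⟫
        = -⟪gradient h (V (k+1)), V (k+1) - mvec H (U (k+1))⟫ := by
      rw [← inner_neg_right]; congr 1; abel
    have hnrev : ‖mvec H (U (k+1)) - V (k+1)‖ = ‖V (k+1) - mvec H (U (k+1))‖ :=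
      norm_sub_rev _ _
    rw [hsymm, hnrev] at habs
    have hLk : Lk (k+1) = f (U (k+1)) + h (V (k+1))
        - ⟪gradient h (V (k+1)), V (k+1) - mvec H (U (k+1))⟫
        + ρ / 2 * ‖V (k+1) - mvec H (U (k+1))‖ ^ 2 := by
      simp only [hLkdef, lagr, hP, inner_neg_left]
      ring
    rw [hLk]
    have hsq : 0 ≤ ‖V (k+1) - mvec H (U (k+1))‖ ^ 2 := sq_nonneg _
    have hfc := hf (U (k+1))
    have hhc := hh (mvec H (U (k+1)))
    have hpos : 0 ≤ (ρ - Lh) * ‖V (k+1) - mvec H (U (k+1))‖ ^ 2 :=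
      mul_nonneg (by linarith) hsq
    linarith [habs.2, hfc, hhc, hpos]
  -- monotone convergence
  set a : ℕ → ℝ := fun k => Lk (k+1) with hadef
  have hAnti : Antitone a := antitone_nat_of_succ_le (fun k => by
    have := hdescent k
    nlinarith [sq_nonneg ‖V (k+1+1) - V (k+1)‖, hc0pos])
  have hBdd : BddBelow (Set.range a) := by
    refine ⟨0, ?_⟩
    rintro x ⟨k, rfl⟩
    exact hLb k
  have hconv : Tendsto a atTop (nhds (⨅ k, a k)) := tendsto_atTop_ciInf hAnti hBdd
  have hfirst : Tendsto Lk atTop (nhds (⨅ k, a k)) :=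
    (tendsto_add_atTop_iff_nat 1).mp hconv
  have hshift : Tendsto (fun k => a (k+1)) atTop (nhds (⨅ k, a k)) :=
    hconv.comp (tendsto_add_atTop_nat 1)
  have hdiff0 : Tendsto (fun k => a k - a (k+1)) atTop (nhds 0) := by
    have := hconv.sub hshift
    simpa using this
  have hD2 : Tendsto (fun k => ‖V (k+1+1) - V (k+1)‖ ^ 2) atTop (nhds 0) := by
    have hle : ∀ k, ‖V (k+1+1) - V (k+1)‖ ^ 2 ≤ (a k - a (k+1)) / c0 := by
      intro k
      have := hdescent k
      rw [le_div_iff₀ hc0pos]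
      have hak : a k = Lk (k+1) := rfl
      have hak1 : a (k+1) = Lk (k+1+1) := rfl
      rw [hak, hak1]
      linarith [mul_comm c0 (‖V (k+1+1) - V (k+1)‖ ^ 2)]
    have hg0 : Tendsto (fun k => (a k - a (k+1)) / c0) atTop (nhds 0) := by
      have := hdiff0.div_const c0
      simpa using this
    exact squeeze_zero (fun k => sq_nonneg _) hle hg0
  have hDlim : Tendsto (fun k => ‖V (k+1+1) - V (k+1)‖) atTop (nhds 0) := by
    have h1 := hD2.sqrt
    rw [Real.sqrt_zero] at h1
    exact h1.congr (fun k => Real.sqrt_sq (norm_nonneg _))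
  have hVfinal : Tendsto (fun k => ‖V (k+1) - V k‖) atTop (nhds 0) :=
    (tendsto_add_atTop_iff_nat 1).mp hDlim
  have hPlim : Tendsto (fun k => ‖P (k+1+1) - P (k+1)‖) atTop (nhds 0) := by
    refine squeeze_zero (fun k => norm_nonneg _) (fun k => hPdiff k) ?_
    have := hDlim.const_mul Lh
    simpa using this
  have hPfinal : Tendsto (fun k => ‖P (k+1) - P k‖) atTop (nhds 0) :=
    (tendsto_add_atTop_iff_nat 1).mp hPlim
  exact ⟨⟨⨅ k, a k, hfirst⟩, hVfinal, hPfinal⟩
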